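/- Let d ≥ 1 and M = N = 2d. Let H_12, H_13, H_21, H_23, H_31, H_32 be invertible 2d×2d complex matrices and suppose B = H_12 H_32^{-1} H_31 H_21^{-1} H_23 H_13^{-1} is diagonalizable with 2d distinct eigenvalues. Then there exist d-dimensional subspaces U_1, U_2, U_3, V_1, V_2, V_3 of ℂ^{2d} such that V_i ⊥ H_{ij} U_j for all i ≠ j in {1,2,3} (indices of H as given). -/

import Mathlib

open Matrix Submodule Module

namespace IAaux

variable {n : ℕ}

noncomputable def L (A : Matrix (Fin n) (Fin n) ℂ) :
    EuclideanSpace ℂ (Fin n) →ₗ[ℂ] EuclideanSpace ℂ (Fin n) :=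
  Matrix.toEuclideanLin A

lemma Lmul (A B : Matrix (Fin n) (Fin n) ℂ) : L (A * B) = (L A).comp (L B) := by
  simp [L, Matrix.toEuclideanLin_eq_toLin, Matrix.toLin_mul _ (PiLp.basisFun 2 ℂ (Fin n)) _]

lemma Lone : L (1 : Matrix (Fin n) (Fin n) ℂ) = LinearMap.id := by
  simp [L, Matrix.toEuclideanLin_eq_toLin]

noncomputable def Lequiv (A : Matrix (Fin n) (Fin n) ℂ) (hA : IsUnit A) :
    EuclideanSpace ℂ (Fin n) ≃ₗ[ℂ] EuclideanSpace ℂ (Fin n) :=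
  LinearEquiv.ofLinear (L A) (L A⁻¹)
    (by rw [← Lmul, Matrix.mul_nonsing_inv _ ((Matrix.isUnit_iff_isUnit_det _).mp hA), Lone])
    (by rw [← Lmul, Matrix.nonsing_inv_mul _ ((Matrix.isUnit_iff_isUnit_det _).mp hA), Lone])

lemma finrank_map_L {A : Matrix (Fin n) (Fin n) ℂ} (hA : IsUnit A)
    (S : Submodule ℂ (EuclideanSpace ℂ (Fin n))) :
    finrank ℂ (S.map (L A)) = finrank ℂ S :=
  LinearEquiv.finrank_map_eq (Lequiv A hA) S

lemma L_diag_single (D : Fin n → ℂ) (j : Fin n) :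
    L (Matrix.diagonal D) (EuclideanSpace.single j 1) = D j • EuclideanSpace.single j 1 := by
  ext i
  simp [L, Matrix.toEuclideanLin_apply, Matrix.mulVec_diagonal, EuclideanSpace.single_apply]

end IAaux

open IAaux

theorem stmt_13 (d : ℕ) (hd : 1 ≤ d)
    (H12 H13 H21 H23 H31 H32 : Matrix (Fin (2 * d)) (Fin (2 * d)) ℂ)
    (h12 : IsUnit H12) (h13 : IsUnit H13) (h21 : IsUnit H21)
    (h23 : IsUnit H23) (h31 : IsUnit H31) (h32 : IsUnit H32)
    -- B = H12 H32⁻¹ H31 H21⁻¹ H23 H13⁻¹ is diagonalizable with 2d distinct eigenvalues: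
    (P : Matrix (Fin (2 * d)) (Fin (2 * d)) ℂ) (hP : IsUnit P)
    (D : Fin (2 * d) → ℂ) (hD : Function.Injective D)
    (hdiag : H12 * H32⁻¹ * H31 * H21⁻¹ * H23 * H13⁻¹ = P * Matrix.diagonal D * P⁻¹) :
    ∃ U1 U2 U3 V1 V2 V3 : Submodule ℂ (EuclideanSpace ℂ (Fin (2 * d))),
      Module.finrank ℂ U1 = d ∧ Module.finrank ℂ U2 = d ∧ Module.finrank ℂ U3 = d ∧
      Module.finrank ℂ V1 = d ∧ Module.finrank ℂ V2 = d ∧ Module.finrank ℂ V3 = d ∧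
      (∀ v ∈ V1, ∀ u ∈ U2, (inner ℂ v (Matrix.toEuclideanLin H12 u) : ℂ) = 0) ∧
      (∀ v ∈ V1, ∀ u ∈ U3, (inner ℂ v (Matrix.toEuclideanLin H13 u) : ℂ) = 0) ∧
      (∀ v ∈ V2, ∀ u ∈ U1, (inner ℂ v (Matrix.toEuclideanLin H21 u) : ℂ) = 0) ∧
      (∀ v ∈ V2, ∀ u ∈ U3, (inner ℂ v (Matrix.toEuclideanLin H23 u) : ℂ) = 0) ∧
      (∀ v ∈ V3, ∀ u ∈ U1, (inner ℂ v (Matrix.toEuclideanLin H31 u) : ℂ) = 0) ∧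
      (∀ v ∈ V3, ∀ u ∈ U2, (inner ℂ v (Matrix.toEuclideanLin H32 u) : ℂ) = 0) := by
  -- unit determinants
  have d12 := (Matrix.isUnit_iff_isUnit_det _).mp h12
  have d13 := (Matrix.isUnit_iff_isUnit_det _).mp h13
  have d21 := (Matrix.isUnit_iff_isUnit_det _).mp h21
  have d23 := (Matrix.isUnit_iff_isUnit_det _).mp h23
  have d31 := (Matrix.isUnit_iff_isUnit_det _).mp h31
  have d32 := (Matrix.isUnit_iff_isUnit_det _).mp h32
  have dP := (Matrix.isUnit_iff_isUnit_det _).mp hP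
  -- D i is nonzero for all i
  have hDunit : ∀ i, D i ≠ 0 := by
    have hBunit : IsUnit (H12 * H32⁻¹ * H31 * H21⁻¹ * H23 * H13⁻¹) := by
      exact (((((h12.mul (Matrix.isUnit_nonsing_inv_iff.mpr h32)).mul h31).mul
        (Matrix.isUnit_nonsing_inv_iff.mpr h21)).mul h23).mul
        (Matrix.isUnit_nonsing_inv_iff.mpr h13))
    have hDdiag : IsUnit (Matrix.diagonal D) := by
      have : Matrix.diagonal D = P⁻¹ * (H12 * H32⁻¹ * H31 * H21⁻¹ * H23 * H13⁻¹) * P := by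
        rw [hdiag]
        rw [Matrix.mul_assoc, Matrix.nonsing_inv_mul_cancel_right _ _ dP,
          Matrix.nonsing_inv_mul_cancel_left _ _ dP]
      rw [this]
      exact ((Matrix.isUnit_nonsing_inv_iff.mpr hP).mul hBunit).mul hP
    rw [Matrix.isUnit_diagonal] at hDdiag
    intro i
    exact (hDdiag.map (Pi.evalMonoidHom (fun _ => ℂ) i)).ne_zero
  -- the base subspace S spanned by the first d standard basis vectors
  have hle : d ≤ 2 * d := by omega
  set emb : Fin d → Fin (2 * d) := Fin.castLE hle with hemb
  set b : Fin d → EuclideanSpace ℂ (Fin (2 * d)) :=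
    fun i => EuclideanSpace.single (emb i) 1 with hb
  have hbli : LinearIndependent ℂ b := by
    have : b = (fun j => (EuclideanSpace.basisFun (Fin (2 * d)) ℂ).toBasis j) ∘ emb := by
      funext i
      simp [hb, EuclideanSpace.basisFun_apply]
    rw [this]
    exact (EuclideanSpace.basisFun (Fin (2 * d)) ℂ).toBasis.linearIndependent.comp emb
      (Fin.castLE_injective hle)
  set S : Submodule ℂ (EuclideanSpace ℂ (Fin (2 * d))) := Submodule.span ℂ (Set.range b) with hS
  have hSrank : finrank ℂ S = d := by
    rw [hS, finrank_span_eq_card hbli, Fintype.card_fin]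
  -- S is invariant under the diagonal matrix
  have hSinv : S.map (L (Matrix.diagonal D)) = S := by
    rw [hS, Submodule.map_span]
    apply le_antisymm
    · rw [Submodule.span_le]
      rintro x ⟨y, ⟨i, rfl⟩, rfl⟩
      rw [hb]
      show L (Matrix.diagonal D) (EuclideanSpace.single (emb i) 1) ∈ _
      rw [L_diag_single]
      exact Submodule.smul_mem _ _ (Submodule.subset_span ⟨i, rfl⟩)
    · rw [Submodule.span_le]
      rintro x ⟨i, rfl⟩
      have : b i = (D (emb i))⁻¹ • (L (Matrix.diagonal D) (b i)) := by
        rw [hb]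
        show _ = (D (emb i))⁻¹ • (L (Matrix.diagonal D) (EuclideanSpace.single (emb i) 1))
        rw [L_diag_single, smul_smul, inv_mul_cancel₀ (hDunit _), one_smul]
      rw [this]
      exact Submodule.smul_mem _ _ (Submodule.subset_span ⟨b i, ⟨i, rfl⟩, rfl⟩)
  -- the matrices
  set Q : Matrix (Fin (2 * d)) (Fin (2 * d)) ℂ := H12⁻¹ * P with hQ
  have hQu : IsUnit Q := (Matrix.isUnit_nonsing_inv_iff.mpr h12).mul hP
  set M3 : Matrix (Fin (2 * d)) (Fin (2 * d)) ℂ := H13⁻¹ * (H12 * Q) with hM3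
  set M1 : Matrix (Fin (2 * d)) (Fin (2 * d)) ℂ := H21⁻¹ * (H23 * M3) with hM1
  have hM3u : IsUnit M3 :=
    (Matrix.isUnit_nonsing_inv_iff.mpr h13).mul (h12.mul hQu)
  have hM1u : IsUnit M1 :=
    (Matrix.isUnit_nonsing_inv_iff.mpr h21).mul (h23.mul hM3u)
  -- key matrix identity:  H31 * M1 = H32 * Q * diagonal D
  have hkey : H31 * M1 = H32 * (Q * Matrix.diagonal D) := by
    have e1 : H12 * H32⁻¹ * H31 * H21⁻¹ * H23 * H13⁻¹ * P = P * Matrix.diagonal D := by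
      rw [hdiag, Matrix.nonsing_inv_mul_cancel_right _ _ dP]
    have e2 : H32 * (H12⁻¹ * (H12 * H32⁻¹ * H31 * H21⁻¹ * H23 * H13⁻¹ * P)) =
        H32 * (H12⁻¹ * (P * Matrix.diagonal D)) := by rw [e1]
    calc H31 * M1
        = H32 * (H12⁻¹ * (H12 * H32⁻¹ * H31 * H21⁻¹ * H23 * H13⁻¹ * P)) := by
          rw [hM1, hM3, hQ]
          simp only [Matrix.mul_assoc]
          rw [Matrix.nonsing_inv_mul_cancel_left _ _ d12,
            Matrix.mul_nonsing_inv_cancel_left _ _ d12,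
            Matrix.mul_nonsing_inv_cancel_left _ _ d32]
      _ = H32 * (H12⁻¹ * (P * Matrix.diagonal D)) := e2
      _ = H32 * (Q * Matrix.diagonal D) := by rw [hQ, Matrix.mul_assoc]
  -- the subspaces
  set U1 : Submodule ℂ (EuclideanSpace ℂ (Fin (2 * d))) := S.map (L M1) with hU1
  set U2 : Submodule ℂ (EuclideanSpace ℂ (Fin (2 * d))) := S.map (L Q) with hU2
  set U3 : Submodule ℂ (EuclideanSpace ℂ (Fin (2 * d))) := S.map (L M3) with hU3
  set W3 : Submodule ℂ (EuclideanSpace ℂ (Fin (2 * d))) := S.map (L (H12 * Q)) with hW3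
  set W1 : Submodule ℂ (EuclideanSpace ℂ (Fin (2 * d))) := S.map (L (H23 * M3)) with hW1
  set W2 : Submodule ℂ (EuclideanSpace ℂ (Fin (2 * d))) := S.map (L (H32 * Q)) with hW2
  -- image identities
  have map12 : U2.map (L H12) = W3 := by rw [hU2, hW3, ← Submodule.map_comp, ← Lmul]
  have map13 : U3.map (L H13) = W3 := by
    rw [hU3, hW3, ← Submodule.map_comp, ← Lmul, hM3,
      Matrix.mul_nonsing_inv_cancel_left _ _ d13]
  have map21 : U1.map (L H21) = W1 := by
    rw [hU1, hW1, ← Submodule.map_comp, ← Lmul, hM1,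
      Matrix.mul_nonsing_inv_cancel_left _ _ d21]
  have map23 : U3.map (L H23) = W1 := by rw [hU3, hW1, ← Submodule.map_comp, ← Lmul]
  have map32 : U2.map (L H32) = W2 := by rw [hU2, hW2, ← Submodule.map_comp, ← Lmul]
  have map31 : U1.map (L H31) = W2 := by
    rw [hU1, hW2, ← Submodule.map_comp, ← Lmul, hkey, Lmul, Lmul, Submodule.map_comp,
      Submodule.map_comp, hSinv, ← Submodule.map_comp, ← Lmul]
  -- finranks
  have hU1r : finrank ℂ U1 = d := by rw [hU1, finrank_map_L hM1u, hSrank]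
  have hU2r : finrank ℂ U2 = d := by rw [hU2, finrank_map_L hQu, hSrank]
  have hU3r : finrank ℂ U3 = d := by rw [hU3, finrank_map_L hM3u, hSrank]
  have hWr : ∀ (A : Matrix (Fin (2 * d)) (Fin (2 * d)) ℂ), IsUnit A →
      finrank ℂ ((S.map (L A))ᗮ : Submodule ℂ (EuclideanSpace ℂ (Fin (2 * d)))) = d := by
    intro A hA
    have h1 := Submodule.finrank_add_finrank_orthogonal (K := S.map (L A))
    rw [finrank_map_L hA, hSrank, finrank_euclideanSpace_fin] at h1
    omega
  -- orthogonality helper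
  have orth : ∀ (W U : Submodule ℂ (EuclideanSpace ℂ (Fin (2 * d))))
      (A : Matrix (Fin (2 * d)) (Fin (2 * d)) ℂ), U.map (L A) = W →
      ∀ v ∈ Wᗮ, ∀ u ∈ U, (inner ℂ v (Matrix.toEuclideanLin A u) : ℂ) = 0 := by
    intro W U A hWU v hv u hu
    have : (Matrix.toEuclideanLin A) u ∈ W := by
      rw [← hWU]; exact ⟨u, hu, rfl⟩
    exact (Submodule.mem_orthogonal' W v).mp hv _ this
  refine ⟨U1, U2, U3, W3ᗮ, W1ᗮ, W2ᗮ, hU1r, hU2r, hU3r, ?_, ?_, ?_,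
    orth _ _ _ map12, orth _ _ _ map13, orth _ _ _ map21,
    orth _ _ _ map23, orth _ _ _ map31, orth _ _ _ map32⟩
  · rw [hW3]; exact hWr _ (h12.mul hQu)
  · rw [hW1]; exact hWr _ (h23.mul hM3u)
  · rw [hW2]; exact hWr _ (h32.mul hQu)
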